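/- Let v be a von Neumann natural number (a hereditarily finite set with v = {0, 1, ..., n−1} where each k is the von Neumann numeral) and z be a Zermelo numeral (z = σ^m(∅) where σ(x) = {x}). Then TC({v}) ∩ TC({z}) ⊆ {∅, {∅}}, where TC denotes transitive closure. -/

import Mathlib

open ZFSet

/-- The `n`-th von Neumann numeral: `0 = ∅`, `S x = x ∪ {x}`. -/
def vonNeumann : ℕ → ZFSet
  | 0 => ∅
  | n + 1 => insert (vonNeumann n) (vonNeumann n)

/-- The `n`-th Zermelo numeral: `0 = ∅`, `σ x = {x}`. -/
def zermelo : ℕ → ZFSet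
  | 0 => ∅
  | n + 1 => {zermelo n}

/-- The `n`-fold iterated union of a set. -/
def iterUnion : ℕ → ZFSet → ZFSet
  | 0, A => A
  | n + 1, A => ⋃₀ iterUnion n A

/-- The transitive closure of `A`: the smallest transitive set containing all
elements of `A` (so `TClos {a}` consists of `a` together with all members of
members of … of `a`). -/
noncomputable def TClos (A : ZFSet) : ZFSet :=
  ⋃₀ ZFSet.range fun n : ℕ => iterUnion n A

/-- Base case of the VN–Z Splitting Lemma: if `v` is a von Neumann numeral
and `z` is a Zermelo numeral, then `TC({v}) ∩ TC({z}) ⊆ {∅, {∅}}`. -/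
lemma mem_vonNeumann {x : ZFSet} {k : ℕ} :
    x ∈ _root_.vonNeumann k ↔ ∃ i < k, x = _root_.vonNeumann i := by
  induction k with
  | zero => simp [_root_.vonNeumann]
  | succ k ih =>
    simp only [_root_.vonNeumann, ZFSet.mem_insert_iff, ih]
    constructor
    · rintro (rfl | ⟨i, hi, rfl⟩)
      · exact ⟨k, Nat.lt_succ_self k, rfl⟩
      · exact ⟨i, Nat.lt_succ_of_lt hi, rfl⟩
    · rintro ⟨i, hi, rfl⟩
      rcases Nat.lt_succ_iff_lt_or_eq.mp hi with h | rfl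
      · exact Or.inr ⟨i, h, rfl⟩
      · exact Or.inl rfl

lemma mem_zermelo {x : ZFSet} {k : ℕ} (h : x ∈ zermelo k) :
    ∃ i < k, x = zermelo i := by
  cases k with
  | zero => simp [zermelo] at h
  | succ k =>
    simp only [zermelo, ZFSet.mem_singleton] at h
    exact ⟨k, Nat.lt_succ_self k, h⟩

lemma iter_vn {n k : ℕ} {x : ZFSet} (h : x ∈ iterUnion k {_root_.vonNeumann n}) :
    ∃ i ≤ n, x = _root_.vonNeumann i := by
  induction k generalizing x with
  | zero =>
    simp only [iterUnion, ZFSet.mem_singleton] at h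
    exact ⟨n, le_refl n, h⟩
  | succ k ih =>
    simp only [iterUnion, ZFSet.mem_sUnion] at h
    obtain ⟨y, hy, hxy⟩ := h
    obtain ⟨i, hi, rfl⟩ := ih hy
    obtain ⟨j, hj, rfl⟩ := mem_vonNeumann.mp hxy
    exact ⟨j, le_trans (Nat.le_of_lt hj) hi, rfl⟩

lemma iter_z {m k : ℕ} {x : ZFSet} (h : x ∈ iterUnion k {zermelo m}) :
    ∃ i ≤ m, x = zermelo i := by
  induction k generalizing x with
  | zero =>
    simp only [iterUnion, ZFSet.mem_singleton] at h
    exact ⟨m, le_refl m, h⟩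
  | succ k ih =>
    simp only [iterUnion, ZFSet.mem_sUnion] at h
    obtain ⟨y, hy, hxy⟩ := h
    obtain ⟨i, hi, rfl⟩ := ih hy
    obtain ⟨j, hj, rfl⟩ := mem_zermelo hxy
    exact ⟨j, le_trans (Nat.le_of_lt hj) hi, rfl⟩

lemma empty_ne_singleton_empty : (∅ : ZFSet) ≠ ({∅} : ZFSet) := by
  intro h
  have : (∅ : ZFSet) ∈ ({∅} : ZFSet) := ZFSet.mem_singleton.mpr rfl
  rw [← h] at this
  exact ZFSet.notMem_empty _ this

theorem vn_z_splitting_base (n m : ℕ) :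
    TClos {_root_.vonNeumann n} ∩ TClos {zermelo m} ⊆ ({∅, {∅}} : ZFSet) := by
  intro x hx
  rw [ZFSet.mem_inter] at hx
  obtain ⟨h1, h2⟩ := hx
  simp only [TClos, ZFSet.mem_sUnion, ZFSet.mem_range] at h1 h2
  obtain ⟨_, ⟨k1, rfl⟩, h1⟩ := h1
  obtain ⟨_, ⟨k2, rfl⟩, h2⟩ := h2
  obtain ⟨i, _, rfl⟩ := iter_vn h1
  obtain ⟨j, _, hz⟩ := iter_z h2
  rw [ZFSet.mem_insert_iff, ZFSet.mem_singleton]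
  match i with
  | 0 => exact Or.inl rfl
  | 1 => exact Or.inr (by simp [_root_.vonNeumann])
  | i + 2 =>
    exfalso
    have h0 : _root_.vonNeumann 0 ∈ _root_.vonNeumann (i + 2) := mem_vonNeumann.mpr ⟨0, by omega, rfl⟩
    have h1' : _root_.vonNeumann 1 ∈ _root_.vonNeumann (i + 2) := mem_vonNeumann.mpr ⟨1, by omega, rfl⟩
    rw [hz] at h0 h1'
    obtain ⟨a, _, ha⟩ := mem_zermelo h0
    obtain ⟨b, _, hb⟩ := mem_zermelo h1'
    match j with
    | 0 => simp [zermelo] at h0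
    | j + 1 =>
      simp only [zermelo, ZFSet.mem_singleton] at h0 h1'
      have : _root_.vonNeumann 0 = _root_.vonNeumann 1 := h0.trans h1'.symm
      simp only [_root_.vonNeumann] at this
      exact empty_ne_singleton_empty (by simpa using this)
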